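/- Pruning correctness in SDP-based branch and bound: let w ∈ ℤ^{n×n} be a symmetric integer weight matrix with zero diagonal, let L be the associated weighted graph Laplacian, let y ∈ ℝⁿ satisfy that Diag(y) − L is positive semidefinite, and let k ∈ ℤ. If (1/4)·Σ_i y_i < k + 1, then for every x ∈ {−1, 1}ⁿ, the cut value satisfies (1/4)·xᵀ L x ≤ k. -/

import Mathlib

/-- The weighted graph Laplacian of a weight matrix `w`:
`L_{ii} = Σ_j w_{ij}` and `L_{ij} = -w_{ij}` for `i ≠ j`. -/
def graphLaplacian {n : ℕ} (w : Matrix (Fin n) (Fin n) ℝ) : Matrix (Fin n) (Fin n) ℝ :=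
  Matrix.of fun i j => if i = j then ∑ k, w i k else -w i j

lemma sum_symm_eq_two_mul {n : ℕ} (f : Fin n → Fin n → ℤ)
    (hs : ∀ i j, f i j = f j i) (h0 : ∀ i, f i i = 0) :
    ∑ i, ∑ j, f i j =
      2 * ∑ p ∈ (Finset.univ ×ˢ Finset.univ).filter
        (fun p : Fin n × Fin n => p.1 < p.2), f p.1 p.2 := by
  classical
  rw [← Finset.sum_product']
  rw [← Finset.sum_filter_add_sum_filter_not (Finset.univ ×ˢ Finset.univ)
    (fun p : Fin n × Fin n => p.1 < p.2) (fun p => f p.1 p.2)]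
  have h2 : ∑ p ∈ (Finset.univ ×ˢ Finset.univ).filter
      (fun p : Fin n × Fin n => ¬ p.1 < p.2), f p.1 p.2
      = ∑ p ∈ (Finset.univ ×ˢ Finset.univ).filter
        (fun p : Fin n × Fin n => p.1 < p.2), f p.1 p.2 := by
    rw [← Finset.sum_filter_add_sum_filter_not
      ((Finset.univ ×ˢ Finset.univ).filter (fun p : Fin n × Fin n => ¬ p.1 < p.2))
      (fun p : Fin n × Fin n => p.1 = p.2) (fun p => f p.1 p.2)]
    have hdz : ∑ p ∈ (((Finset.univ ×ˢ Finset.univ).filter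
        (fun p : Fin n × Fin n => ¬ p.1 < p.2)).filter
        (fun p : Fin n × Fin n => p.1 = p.2)), f p.1 p.2 = 0 := by
      apply Finset.sum_eq_zero
      intro p hp
      simp only [Finset.mem_filter] at hp
      rw [hp.2]
      exact h0 p.2
    rw [hdz, zero_add]
    apply Finset.sum_nbij' (fun p => Prod.swap p) (fun p => Prod.swap p)
    · intro p hp
      simp only [Finset.mem_filter, Finset.mem_product, Finset.mem_univ, true_and,
        Prod.fst_swap, Prod.snd_swap] at hp ⊢
      omega
    · intro p hp
      simp only [Finset.mem_filter, Finset.mem_product, Finset.mem_univ, true_and,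
        Prod.fst_swap, Prod.snd_swap] at hp ⊢
      constructor
      · omega
      · omega
    · intro p _; simp
    · intro p _; simp
    · intro p _; exact hs p.1 p.2
  rw [h2]; ring

theorem bnb_pruning_correct {n : ℕ}
    (w : Matrix (Fin n) (Fin n) ℤ) (hw : w.IsSymm) (hdiag : ∀ i, w i i = 0)
    (y : Fin n → ℝ)
    (hy : (Matrix.diagonal y - graphLaplacian (w.map (Int.cast : ℤ → ℝ))).PosSemidef)
    (k : ℤ) (hk : (1 / 4) * ∑ i, y i < (k : ℝ) + 1) :
    ∀ x : Fin n → ℝ, (∀ i, x i = 1 ∨ x i = -1) →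
      (1 / 4) * dotProduct x
        ((graphLaplacian (w.map (Int.cast : ℤ → ℝ))).mulVec x) ≤ (k : ℝ) := by
  intro x hx
  classical
  set L := graphLaplacian (w.map (Int.cast : ℤ → ℝ)) with hLdef
  have hsymw : ∀ i j, w i j = w j i := by
    intro i j
    have := congrFun (congrFun hw.eq j) i
    simpa [Matrix.transpose_apply] using this
  have hx2 : ∀ i, x i * x i = 1 := by
    intro i; rcases hx i with h | h <;> rw [h] <;> ring
  -- integer sign vector
  set z : Fin n → ℤ := fun i => if x i = 1 then 1 else -1 with hzdef
  have hz1 : ∀ i, z i = 1 ∨ z i = -1 := by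
    intro i; simp only [hzdef]; split
    · exact Or.inl rfl
    · exact Or.inr rfl
  have hxz : ∀ i, x i = (z i : ℝ) := by
    intro i
    rcases hx i with h | h
    · simp [hzdef, h]
    · rw [h]; simp only [hzdef]
      rw [if_neg (by rw [h]; norm_num)]
      norm_num
  -- L as a difference
  have hLeq : L = Matrix.diagonal (fun i => ∑ j, (w i j : ℝ)) - w.map (Int.cast : ℤ → ℝ) := by
    ext i j
    by_cases h : i = j
    · subst h
      simp [hLdef, graphLaplacian, Matrix.diagonal, hdiag]
    · simp [hLdef, graphLaplacian, Matrix.diagonal, h]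
  -- quadratic form as integer sum
  have hquad : dotProduct x (L.mulVec x)
      = ((∑ i, ∑ j, w i j * (1 - z i * z j) : ℤ) : ℝ) := by
    rw [hLeq, Matrix.sub_mulVec, dotProduct_sub]
    have h1 : dotProduct x ((Matrix.diagonal (fun i => ∑ j, (w i j : ℝ))).mulVec x)
        = ∑ i, ∑ j, (w i j : ℝ) := by
      simp only [dotProduct, Matrix.mulVec_diagonal]
      refine Finset.sum_congr rfl fun i _ => ?_
      rw [show x i * ((∑ j, (w i j : ℝ)) * x i) = (x i * x i) * ∑ j, (w i j : ℝ) by ring,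
        hx2 i, one_mul]
    have h2 : dotProduct x ((w.map (Int.cast : ℤ → ℝ)).mulVec x)
        = ∑ i, ∑ j, (w i j : ℝ) * (x i * x j) := by
      simp only [dotProduct, Matrix.mulVec, dotProduct, Matrix.map_apply,
        Finset.mul_sum]
      exact Finset.sum_congr rfl fun i _ => Finset.sum_congr rfl fun j _ => by ring
    rw [h1, h2]
    push_cast
    rw [← Finset.sum_sub_distrib]
    refine Finset.sum_congr rfl fun i _ => ?_
    rw [← Finset.sum_sub_distrib]
    refine Finset.sum_congr rfl fun j _ => ?_
    rw [hxz i, hxz j]; ring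
  -- divisibility by 4
  set g : Fin n → Fin n → ℤ := fun i j => w i j * (if z i = z j then 0 else 1) with hgdef
  have hfg : ∀ i j, w i j * (1 - z i * z j) = 2 * g i j := by
    intro i j
    simp only [hgdef]
    rcases hz1 i with h | h <;> rcases hz1 j with h' | h' <;>
      rw [h, h'] <;> norm_num <;> ring
  have hgsymm : ∀ i j, g i j = g j i := by
    intro i j
    simp only [hgdef]
    rw [hsymw i j]
    simp only [eq_comm]
  have hg0 : ∀ i, g i i = 0 := by
    intro i; simp [hgdef]
  set c : ℤ := ∑ p ∈ (Finset.univ ×ˢ Finset.univ).filter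
      (fun p : Fin n × Fin n => p.1 < p.2), g p.1 p.2 with hcdef
  have hS : (∑ i, ∑ j, w i j * (1 - z i * z j) : ℤ) = 4 * c := by
    calc (∑ i, ∑ j, w i j * (1 - z i * z j) : ℤ)
        = ∑ i, ∑ j, 2 * g i j := by
          refine Finset.sum_congr rfl fun i _ => Finset.sum_congr rfl fun j _ => hfg i j
      _ = 2 * ∑ i, ∑ j, g i j := by
          rw [Finset.mul_sum]
          exact Finset.sum_congr rfl fun i _ => (Finset.mul_sum _ _ _).symm
      _ = 2 * (2 * c) := by rw [sum_symm_eq_two_mul g hgsymm hg0]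
      _ = 4 * c := by ring
  -- PSD bound
  have hbound : dotProduct x (L.mulVec x) ≤ ∑ i, y i := by
    have hp := hy.dotProduct_mulVec_nonneg x
    rw [Matrix.sub_mulVec, dotProduct_sub] at hp
    have hstar : (star x : Fin n → ℝ) = x := by
      funext i; simp
    rw [hstar] at hp
    have hd : dotProduct x ((Matrix.diagonal y).mulVec x) = ∑ i, y i := by
      simp only [dotProduct, Matrix.mulVec_diagonal]
      refine Finset.sum_congr rfl fun i _ => ?_
      rw [show x i * (y i * x i) = (x i * x i) * y i by ring, hx2 i, one_mul]
    rw [hd] at hp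
    linarith
  -- conclude
  have hcreal : dotProduct x (L.mulVec x) = 4 * (c : ℝ) := by
    rw [hquad, hS]; push_cast; ring
  have hclt : (c : ℝ) < (k : ℝ) + 1 := by
    rw [hcreal] at hbound
    linarith
  have hck : c ≤ k := by
    have : c < k + 1 := by exact_mod_cast hclt
    omega
  rw [hcreal]
  have : (c : ℝ) ≤ (k : ℝ) := by exact_mod_cast hck
  linarith
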